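/- For n ≥ 3, the set {u_0, u_1, v_0} is an edge metric generator of the prism graph GP(n,1); that is, every two distinct edges of GP(n,1) are distinguished by their distances to some vertex in {u_0, u_1, v_0}. -/
import Mathlib


open SimpleGraph

/-- Distance from a vertex to an edge: `d(w,e) = min over endpoints`. -/
noncomputable def edgeDist {V : Type*} (G : SimpleGraph V) (w : V) (e : Sym2 V) : ℕ :=
  Sym2.lift ⟨fun x y => min (G.dist w x) (G.dist w y), fun x y => min_comm _ _⟩ e

/-- `S` is an edge metric generator: distinct edges get distinct distance vectors. -/
def IsEdgeGenerator {V : Type*} (G : SimpleGraph V) (S : Set V) : Prop :=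
  ∀ e₁ ∈ G.edgeSet, ∀ e₂ ∈ G.edgeSet,
    (∀ w ∈ S, edgeDist G w e₁ = edgeDist G w e₂) → e₁ = e₂

/-- The edge metric dimension: minimum cardinality of an edge metric generator. -/
noncomputable def edgeMetricDim {V : Type*} (G : SimpleGraph V) : ℕ :=
  sInf {n | ∃ S : Set V, S.Finite ∧ S.ncard = n ∧ IsEdgeGenerator G S}

/-- `S` resolves all pairs of vertices. -/
def IsResolving {V : Type*} (G : SimpleGraph V) (S : Set V) : Prop :=
  ∀ x y : V, (∀ w ∈ S, G.dist w x = G.dist w y) → x = y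

/-- The metric dimension. -/
noncomputable def metricDim {V : Type*} (G : SimpleGraph V) : ℕ :=
  sInf {n | ∃ S : Set V, S.Finite ∧ S.ncard = n ∧ IsResolving G S}

/-- The generalized Petersen graph `GP n k`: outer vertices `Sum.inl i` (the `uᵢ`),
inner vertices `Sum.inr i` (the `vᵢ`). -/
def GP (n k : ℕ) : SimpleGraph (Fin n ⊕ Fin n) :=
  SimpleGraph.fromRel (fun a b =>
    match a, b with
    | Sum.inl i, Sum.inl j => (j : ℕ) = ((i : ℕ) + 1) % n
    | Sum.inl i, Sum.inr j => i = j
    | Sum.inr i, Sum.inr j => (j : ℕ) = ((i : ℕ) + k) % n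
    | _, _ => False)

namespace Stmt5Aux

open Sum

/-- circular distance to `0` -/
def cd0 (n j : ℕ) : ℕ := min j (n - j)

/-- circular distance to `1` -/
def cd1 (n j : ℕ) : ℕ := if j = 0 then 1 else min (j-1) (n-(j-1))

/-- successor on the cycle -/
def fsucc {n : ℕ} (i : Fin n) : Fin n := ⟨((i : ℕ) + 1) % n, Nat.mod_lt _ i.pos⟩

@[simp] lemma fsucc_val {n : ℕ} (i : Fin n) : ((fsucc i : Fin n) : ℕ) = ((i : ℕ) + 1) % n := rfl

variable {n : ℕ}

lemma succ_char (hn : 3 ≤ n) {a : ℕ} (ha : a < n) :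
    ((a+1) % n = a+1 ∧ a+1 < n) ∨ ((a+1) % n = 0 ∧ a+1 = n) := by
  rcases Nat.lt_or_ge (a+1) n with h|h
  · exact Or.inl ⟨Nat.mod_eq_of_lt h, h⟩
  · have h' : a + 1 = n := by omega
    exact Or.inr ⟨by rw [h']; exact Nat.mod_self n, h'⟩

lemma succ_ne (hn : 3 ≤ n) {a : ℕ} (ha : a < n) : (a+1) % n ≠ a := by
  rcases succ_char hn ha with ⟨h1,h2⟩|⟨h1,h2⟩ <;> omega

lemma cd0_lip (hn : 3 ≤ n) : ∀ a, a < n →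
    cd0 n ((a+1) % n) ≤ cd0 n a + 1 ∧ cd0 n a ≤ cd0 n ((a+1) % n) + 1 := by
  intro a ha
  rcases succ_char hn ha with ⟨h1,h2⟩|⟨h1,h2⟩ <;> unfold cd0 <;> rw [h1] <;> omega

lemma cd1_lip (hn : 3 ≤ n) : ∀ a, a < n →
    cd1 n ((a+1) % n) ≤ cd1 n a + 1 ∧ cd1 n a ≤ cd1 n ((a+1) % n) + 1 := by
  intro a ha
  rcases succ_char hn ha with ⟨h1,h2⟩|⟨h1,h2⟩ <;> unfold cd1 <;> rw [h1] <;>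
    split_ifs <;> first | contradiction | omega

lemma step {V : Type*} {G : SimpleGraph V} {w x y : V} {m : ℕ}
    (hr : G.Reachable w x) (hd : G.dist w x ≤ m) (hxy : G.Adj x y) :
    G.Reachable w y ∧ G.dist w y ≤ m + 1 := by
  obtain ⟨p, hp⟩ := hr.exists_walk_length_eq_dist
  refine ⟨hr.trans hxy.reachable, ?_⟩
  have h := SimpleGraph.dist_le (p.concat hxy)
  rw [SimpleGraph.Walk.length_concat, hp] at h
  omega

lemma pot_le_dist {V : Type*} {G : SimpleGraph V} (f : V → ℕ) {w : V} (hw : f w = 0)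
    (hf : ∀ x y, G.Adj x y → f y ≤ f x + 1) {x : V} (hr : G.Reachable w x) :
    f x ≤ G.dist w x := by
  obtain ⟨p, hp⟩ := hr.exists_walk_length_eq_dist
  have key : ∀ {a b : V} (q : G.Walk a b), f b ≤ f a + q.length := by
    intro a b q
    induction q with
    | nil => simp
    | cons h q ih =>
        have h2 := hf _ _ h
        simp only [SimpleGraph.Walk.length_cons]
        omega
  have := key p
  omega

lemma adj_outer (hn : 3 ≤ n) (a b : Fin n) (h : (b : ℕ) = ((a : ℕ) + 1) % n) :
    (GP n 1).Adj (inl a) (inl b) := by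
  rw [GP, SimpleGraph.fromRel_adj]
  refine ⟨?_, Or.inl h⟩
  intro he
  obtain rfl : a = b := Sum.inl_injective he
  exact succ_ne hn a.isLt h.symm

lemma adj_inner (hn : 3 ≤ n) (a b : Fin n) (h : (b : ℕ) = ((a : ℕ) + 1) % n) :
    (GP n 1).Adj (inr a) (inr b) := by
  rw [GP, SimpleGraph.fromRel_adj]
  refine ⟨?_, Or.inl h⟩
  intro he
  obtain rfl : a = b := Sum.inr_injective he
  exact succ_ne hn a.isLt h.symm

lemma adj_spoke (a : Fin n) : (GP n 1).Adj (inl a) (inr a) := by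
  rw [GP, SimpleGraph.fromRel_adj]
  exact ⟨by simp, Or.inl rfl⟩

lemma chain_outer (hn : 3 ≤ n) (a : Fin n) :
    ∀ (m : ℕ) (b : Fin n), (b : ℕ) = ((a : ℕ) + m) % n →
      (GP n 1).Reachable (inl a) (inl b) ∧ (GP n 1).dist (inl a) (inl b) ≤ m := by
  intro m
  induction m with
  | zero =>
      intro b hb
      obtain rfl : b = a := Fin.ext (by rw [hb, Nat.add_zero, Nat.mod_eq_of_lt a.isLt])
      exact ⟨SimpleGraph.Reachable.refl _, by simp⟩
  | succ m ih =>
      intro b hb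
      obtain ⟨hr, hd⟩ := ih ⟨((a : ℕ) + m) % n, Nat.mod_lt _ (by omega)⟩ rfl
      refine step hr hd (adj_outer hn _ b ?_)
      show (b : ℕ) = (((a : ℕ) + m) % n + 1) % n
      rw [Nat.mod_add_mod, hb, Nat.add_assoc]

lemma chain_inner (hn : 3 ≤ n) (a : Fin n) :
    ∀ (m : ℕ) (b : Fin n), (b : ℕ) = ((a : ℕ) + m) % n →
      (GP n 1).Reachable (inr a) (inr b) ∧ (GP n 1).dist (inr a) (inr b) ≤ m := by
  intro m
  induction m with
  | zero =>
      intro b hb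
      obtain rfl : b = a := Fin.ext (by rw [hb, Nat.add_zero, Nat.mod_eq_of_lt a.isLt])
      exact ⟨SimpleGraph.Reachable.refl _, by simp⟩
  | succ m ih =>
      intro b hb
      obtain ⟨hr, hd⟩ := ih ⟨((a : ℕ) + m) % n, Nat.mod_lt _ (by omega)⟩ rfl
      refine step hr hd (adj_inner hn _ b ?_)
      show (b : ℕ) = (((a : ℕ) + m) % n + 1) % n
      rw [Nat.mod_add_mod, hb, Nat.add_assoc]

lemma reach_outer (hn : 3 ≤ n) (a b : Fin n) : (GP n 1).Reachable (inl a) (inl b) :=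
  (chain_outer hn a (n + (b : ℕ) - (a : ℕ)) b (by
    rw [show (a : ℕ) + (n + (b : ℕ) - (a : ℕ)) = n + (b : ℕ) by omega,
      Nat.add_mod_left, Nat.mod_eq_of_lt b.isLt])).1

lemma reach_all (hn : 3 ≤ n) (x y : Fin n ⊕ Fin n) : (GP n 1).Reachable x y := by
  have key : ∀ z : Fin n ⊕ Fin n, (GP n 1).Reachable (inl ⟨0, by omega⟩) z := by
    intro z
    cases z with
    | inl b => exact reach_outer hn _ b
    | inr b => exact (reach_outer hn _ b).trans (adj_spoke b).reachable
  exact (key x).symm.trans (key y)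

lemma pot_lip (hn : 3 ≤ n) (g : ℕ → ℕ) (s t : ℕ) (hst : s ≤ t + 1 ∧ t ≤ s + 1)
    (hg : ∀ a, a < n → g ((a+1) % n) ≤ g a + 1 ∧ g a ≤ g ((a+1) % n) + 1) :
    ∀ x y, (GP n 1).Adj x y →
      Sum.elim (fun j : Fin n => g j + s) (fun j : Fin n => g j + t) y
        ≤ Sum.elim (fun j : Fin n => g j + s) (fun j : Fin n => g j + t) x + 1 := by
  intro x y h
  rw [GP, SimpleGraph.fromRel_adj] at h
  obtain ⟨hne, h⟩ := h
  cases x with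
  | inl i =>
    cases y with
    | inl j =>
        simp only [Sum.elim_inl]
        rcases h with h | h
        · have := hg i i.isLt; rw [← h] at this; omega
        · have := hg j j.isLt; rw [← h] at this; omega
    | inr j =>
        rcases h with h | h
        · obtain rfl : i = j := h
          simp only [Sum.elim_inl, Sum.elim_inr]; omega
        · exact h.elim
  | inr i =>
    cases y with
    | inl j =>
        rcases h with h | h
        · exact h.elim
        · obtain rfl : j = i := h
          simp only [Sum.elim_inl, Sum.elim_inr]; omega
    | inr j =>
        simp only [Sum.elim_inr]
        rcases h with h | h
        · have := hg i i.isLt; rw [← h] at this; omega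
        · have := hg j j.isLt; rw [← h] at this; omega

/-! ### Distance formulas -/

lemma dist_u0_inl (hn : 3 ≤ n) (z : Fin n) (hz : (z : ℕ) = 0) (i : Fin n) :
    (GP n 1).dist (inl z) (inl i) = cd0 n (i : ℕ) := by
  apply le_antisymm
  · have h1 : (GP n 1).dist (inl z) (inl i) ≤ (i : ℕ) :=
      (chain_outer hn z (i : ℕ) i (by rw [hz, Nat.zero_add, Nat.mod_eq_of_lt i.isLt])).2
    have h2 : (GP n 1).dist (inl z) (inl i) ≤ n - (i : ℕ) := by
      rw [SimpleGraph.dist_comm]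
      exact (chain_outer hn i (n - (i : ℕ)) z (by
        rw [hz, show (i : ℕ) + (n - (i : ℕ)) = n by have := i.isLt; omega, Nat.mod_self])).2
    unfold cd0
    omega
  · have hl := pot_le_dist
      (Sum.elim (fun j : Fin n => cd0 n j + 0) (fun j : Fin n => cd0 n j + 1))
      (by simp [cd0, hz])
      (pot_lip hn (cd0 n) 0 1 ⟨by omega, by omega⟩ (cd0_lip hn))
      (reach_all hn (inl z) (inl i))
    simpa using hl

lemma dist_u0_inr (hn : 3 ≤ n) (z : Fin n) (hz : (z : ℕ) = 0) (i : Fin n) :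
    (GP n 1).dist (inl z) (inr i) = cd0 n (i : ℕ) + 1 := by
  apply le_antisymm
  · exact (step (reach_all hn _ _) (le_of_eq (dist_u0_inl hn z hz i)) (adj_spoke i)).2
  · have hl := pot_le_dist
      (Sum.elim (fun j : Fin n => cd0 n j + 0) (fun j : Fin n => cd0 n j + 1))
      (by simp [cd0, hz])
      (pot_lip hn (cd0 n) 0 1 ⟨by omega, by omega⟩ (cd0_lip hn))
      (reach_all hn (inl z) (inr i))
    simpa using hl

lemma dist_v0_inr (hn : 3 ≤ n) (z : Fin n) (hz : (z : ℕ) = 0) (i : Fin n) :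
    (GP n 1).dist (inr z) (inr i) = cd0 n (i : ℕ) := by
  apply le_antisymm
  · have h1 : (GP n 1).dist (inr z) (inr i) ≤ (i : ℕ) :=
      (chain_inner hn z (i : ℕ) i (by rw [hz, Nat.zero_add, Nat.mod_eq_of_lt i.isLt])).2
    have h2 : (GP n 1).dist (inr z) (inr i) ≤ n - (i : ℕ) := by
      rw [SimpleGraph.dist_comm]
      exact (chain_inner hn i (n - (i : ℕ)) z (by
        rw [hz, show (i : ℕ) + (n - (i : ℕ)) = n by have := i.isLt; omega, Nat.mod_self])).2
    unfold cd0
    omega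
  · have hl := pot_le_dist
      (Sum.elim (fun j : Fin n => cd0 n j + 1) (fun j : Fin n => cd0 n j + 0))
      (by simp [cd0, hz])
      (pot_lip hn (cd0 n) 1 0 ⟨by omega, by omega⟩ (cd0_lip hn))
      (reach_all hn (inr z) (inr i))
    simpa using hl

lemma dist_v0_inl (hn : 3 ≤ n) (z : Fin n) (hz : (z : ℕ) = 0) (i : Fin n) :
    (GP n 1).dist (inr z) (inl i) = cd0 n (i : ℕ) + 1 := by
  apply le_antisymm
  · exact (step (reach_all hn _ _) (le_of_eq (dist_v0_inr hn z hz i)) (adj_spoke i).symm).2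
  · have hl := pot_le_dist
      (Sum.elim (fun j : Fin n => cd0 n j + 1) (fun j : Fin n => cd0 n j + 0))
      (by simp [cd0, hz])
      (pot_lip hn (cd0 n) 1 0 ⟨by omega, by omega⟩ (cd0_lip hn))
      (reach_all hn (inr z) (inl i))
    simpa using hl

lemma dist_u1_inl (hn : 3 ≤ n) (z : Fin n) (hz : (z : ℕ) = 1) (i : Fin n) :
    (GP n 1).dist (inl z) (inl i) = cd1 n (i : ℕ) := by
  apply le_antisymm
  · by_cases hi : (i : ℕ) = 0
    · have hadj : (GP n 1).Adj (inl i) (inl z) :=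
        adj_outer hn i z (by rw [hz, hi, Nat.zero_add, Nat.mod_eq_of_lt (by omega)])
      have hd := SimpleGraph.dist_le hadj.toWalk
      simp only [SimpleGraph.Walk.length_cons, SimpleGraph.Walk.length_nil] at hd
      rw [SimpleGraph.dist_comm] at hd
      unfold cd1
      rw [if_pos hi]
      exact hd
    · have h1 : (GP n 1).dist (inl z) (inl i) ≤ (i : ℕ) - 1 :=
        (chain_outer hn z ((i : ℕ) - 1) i (by
          rw [hz, show 1 + ((i : ℕ) - 1) = (i : ℕ) by omega, Nat.mod_eq_of_lt i.isLt])).2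
      have h2 : (GP n 1).dist (inl z) (inl i) ≤ n - ((i : ℕ) - 1) := by
        rw [SimpleGraph.dist_comm]
        exact (chain_outer hn i (n - ((i : ℕ) - 1)) z (by
          rw [hz, show (i : ℕ) + (n - ((i : ℕ) - 1)) = n + 1 by have := i.isLt; omega,
            Nat.add_mod_left, Nat.mod_eq_of_lt (by omega)])).2
      unfold cd1
      rw [if_neg hi]
      omega
  · have hl := pot_le_dist
      (Sum.elim (fun j : Fin n => cd1 n j + 0) (fun j : Fin n => cd1 n j + 1))
      (by simp [cd1, hz])
      (pot_lip hn (cd1 n) 0 1 ⟨by omega, by omega⟩ (cd1_lip hn))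
      (reach_all hn (inl z) (inl i))
    simpa using hl

lemma dist_u1_inr (hn : 3 ≤ n) (z : Fin n) (hz : (z : ℕ) = 1) (i : Fin n) :
    (GP n 1).dist (inl z) (inr i) = cd1 n (i : ℕ) + 1 := by
  apply le_antisymm
  · exact (step (reach_all hn _ _) (le_of_eq (dist_u1_inl hn z hz i)) (adj_spoke i)).2
  · have hl := pot_le_dist
      (Sum.elim (fun j : Fin n => cd1 n j + 0) (fun j : Fin n => cd1 n j + 1))
      (by simp [cd1, hz])
      (pot_lip hn (cd1 n) 0 1 ⟨by omega, by omega⟩ (cd1_lip hn))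
      (reach_all hn (inl z) (inr i))
    simpa using hl

/-! ### Edge classification and edge distances -/

lemma edgeDist_mk {V : Type*} (G : SimpleGraph V) (w a b : V) :
    edgeDist G w s(a, b) = min (G.dist w a) (G.dist w b) := rfl

lemma classify (hn : 3 ≤ n) {x y : Fin n ⊕ Fin n} (h : (GP n 1).Adj x y) :
    (∃ i : Fin n, s(x, y) = s(Sum.inl i, Sum.inl (fsucc i))) ∨
    (∃ i : Fin n, s(x, y) = s(Sum.inl i, Sum.inr i)) ∨
    (∃ i : Fin n, s(x, y) = s(Sum.inr i, Sum.inr (fsucc i))) := by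
  rw [GP, SimpleGraph.fromRel_adj] at h
  obtain ⟨hne, h⟩ := h
  cases x with
  | inl i =>
    cases y with
    | inl j =>
        left
        rcases h with h | h
        · exact ⟨i, by rw [show j = fsucc i from Fin.ext h]⟩
        · exact ⟨j, by rw [show i = fsucc j from Fin.ext h, Sym2.eq_swap]⟩
    | inr j =>
        right; left
        rcases h with h | h
        · obtain rfl : i = j := h
          exact ⟨i, rfl⟩
        · exact h.elim
  | inr i =>
    cases y with
    | inl j =>
        right; left
        rcases h with h | h
        · exact h.elim
        · obtain rfl : j = i := h
          exact ⟨j, Sym2.eq_swap⟩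
    | inr j =>
        right; right
        rcases h with h | h
        · exact ⟨i, by rw [show j = fsucc i from Fin.ext h]⟩
        · exact ⟨j, by rw [show i = fsucc j from Fin.ext h, Sym2.eq_swap]⟩

lemma outer0 (hn : 3 ≤ n) {a : ℕ} (ha : a < n) :
    min (cd0 n a) (cd0 n ((a+1) % n)) = min a (n-1-a) := by
  rcases succ_char hn ha with ⟨h1,h2⟩|⟨h1,h2⟩ <;> unfold cd0 <;> rw [h1] <;> omega

lemma outer1 (hn : 3 ≤ n) {a : ℕ} (ha : a < n) :
    min (cd1 n a) (cd1 n ((a+1) % n)) = min (a-1) (n-a) := by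
  rcases succ_char hn ha with ⟨h1,h2⟩|⟨h1,h2⟩ <;> unfold cd1 <;> rw [h1] <;>
    split_ifs <;> first | contradiction | omega

lemma minadd (a b : ℕ) : min (a+1) (b+1) = min a b + 1 := by omega

lemma min_succ (a : ℕ) : min a (a+1) = a := by omega

lemma min_succ' (a : ℕ) : min (a+1) a = a := by omega

lemma ed_u0_outer (hn : 3 ≤ n) (z : Fin n) (hz : (z : ℕ) = 0) (i : Fin n) :
    edgeDist (GP n 1) (inl z) s(inl i, inl (fsucc i)) = min (i : ℕ) (n-1-(i : ℕ)) := by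
  rw [edgeDist_mk, dist_u0_inl hn z hz i, dist_u0_inl hn z hz (fsucc i), fsucc_val]
  exact outer0 hn i.isLt

lemma ed_u0_spoke (hn : 3 ≤ n) (z : Fin n) (hz : (z : ℕ) = 0) (i : Fin n) :
    edgeDist (GP n 1) (inl z) s(inl i, inr i) = cd0 n (i : ℕ) := by
  rw [edgeDist_mk, dist_u0_inl hn z hz i, dist_u0_inr hn z hz i, min_succ]

lemma ed_u0_inner (hn : 3 ≤ n) (z : Fin n) (hz : (z : ℕ) = 0) (i : Fin n) :
    edgeDist (GP n 1) (inl z) s(inr i, inr (fsucc i)) = min (i : ℕ) (n-1-(i : ℕ)) + 1 := by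
  rw [edgeDist_mk, dist_u0_inr hn z hz i, dist_u0_inr hn z hz (fsucc i), fsucc_val,
    minadd, outer0 hn i.isLt]

lemma ed_u1_outer (hn : 3 ≤ n) (z : Fin n) (hz : (z : ℕ) = 1) (i : Fin n) :
    edgeDist (GP n 1) (inl z) s(inl i, inl (fsucc i)) = min ((i : ℕ)-1) (n-(i : ℕ)) := by
  rw [edgeDist_mk, dist_u1_inl hn z hz i, dist_u1_inl hn z hz (fsucc i), fsucc_val]
  exact outer1 hn i.isLt

lemma ed_u1_spoke (hn : 3 ≤ n) (z : Fin n) (hz : (z : ℕ) = 1) (i : Fin n) :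
    edgeDist (GP n 1) (inl z) s(inl i, inr i) = cd1 n (i : ℕ) := by
  rw [edgeDist_mk, dist_u1_inl hn z hz i, dist_u1_inr hn z hz i, min_succ]

lemma ed_u1_inner (hn : 3 ≤ n) (z : Fin n) (hz : (z : ℕ) = 1) (i : Fin n) :
    edgeDist (GP n 1) (inl z) s(inr i, inr (fsucc i)) = min ((i : ℕ)-1) (n-(i : ℕ)) + 1 := by
  rw [edgeDist_mk, dist_u1_inr hn z hz i, dist_u1_inr hn z hz (fsucc i), fsucc_val,
    minadd, outer1 hn i.isLt]

lemma ed_v0_outer (hn : 3 ≤ n) (z : Fin n) (hz : (z : ℕ) = 0) (i : Fin n) :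
    edgeDist (GP n 1) (inr z) s(inl i, inl (fsucc i)) = min (i : ℕ) (n-1-(i : ℕ)) + 1 := by
  rw [edgeDist_mk, dist_v0_inl hn z hz i, dist_v0_inl hn z hz (fsucc i), fsucc_val,
    minadd, outer0 hn i.isLt]

lemma ed_v0_spoke (hn : 3 ≤ n) (z : Fin n) (hz : (z : ℕ) = 0) (i : Fin n) :
    edgeDist (GP n 1) (inr z) s(inl i, inr i) = cd0 n (i : ℕ) := by
  rw [edgeDist_mk, dist_v0_inl hn z hz i, dist_v0_inr hn z hz i, min_succ']

lemma ed_v0_inner (hn : 3 ≤ n) (z : Fin n) (hz : (z : ℕ) = 0) (i : Fin n) :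
    edgeDist (GP n 1) (inr z) s(inr i, inr (fsucc i)) = min (i : ℕ) (n-1-(i : ℕ)) := by
  rw [edgeDist_mk, dist_v0_inr hn z hz i, dist_v0_inr hn z hz (fsucc i), fsucc_val]
  exact outer0 hn i.isLt

lemma inj_edge (hn : 3 ≤ n) {i j : ℕ} (hi : i < n) (hj : j < n)
    (h0 : min i (n-1-i) = min j (n-1-j)) (h1 : min (i-1) (n-i) = min (j-1) (n-j)) :
    i = j := by omega

lemma inj_vert (hn : 3 ≤ n) {i j : ℕ} (hi : i < n) (hj : j < n)
    (h0 : cd0 n i = cd0 n j) (h1 : cd1 n i = cd1 n j) : i = j := by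
  unfold cd0 at h0
  unfold cd1 at h1
  split_ifs at h1 <;> omega

end Stmt5Aux

set_option maxHeartbeats 1600000 in
open Stmt5Aux Sum in
/-- `{u₀, u₁, v₀}` is an edge metric generator of `GP(n,1)` for `n ≥ 3`. -/
theorem stmt5 (n : ℕ) (hn : 3 ≤ n) :
    IsEdgeGenerator (GP n 1)
      {Sum.inl ⟨0, by omega⟩, Sum.inl ⟨1, by omega⟩, Sum.inr ⟨0, by omega⟩} := by
  intro e1 he1 e2 he2 hEq
  induction e1 using Sym2.ind with | _ x1 y1 => ?_
  induction e2 using Sym2.ind with | _ x2 y2 => ?_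
  rw [SimpleGraph.mem_edgeSet] at he1 he2
  have H0 := hEq (inl ⟨0, by omega⟩) (Set.mem_insert _ _)
  have H1 := hEq (inl ⟨1, by omega⟩) (Set.mem_insert_of_mem _ (Set.mem_insert _ _))
  have H2 := hEq (inr ⟨0, by omega⟩)
    (Set.mem_insert_of_mem _ (Set.mem_insert_of_mem _ rfl))
  clear hEq
  rcases classify hn he1 with ⟨i, hi⟩ | ⟨i, hi⟩ | ⟨i, hi⟩ <;>
    rcases classify hn he2 with ⟨j, hj⟩ | ⟨j, hj⟩ | ⟨j, hj⟩ <;>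
    rw [hi, hj] at H0 H1 H2 ⊢
  -- outer-outer
  · rw [ed_u0_outer hn ⟨0, by omega⟩ rfl i, ed_u0_outer hn ⟨0, by omega⟩ rfl j] at H0
    rw [ed_u1_outer hn ⟨1, by omega⟩ rfl i, ed_u1_outer hn ⟨1, by omega⟩ rfl j] at H1
    obtain rfl : i = j := Fin.ext (inj_edge hn i.isLt j.isLt H0 H1)
    rfl
  -- outer-spoke
  · rw [ed_u0_outer hn ⟨0, by omega⟩ rfl i, ed_u0_spoke hn ⟨0, by omega⟩ rfl j] at H0
    rw [ed_v0_outer hn ⟨0, by omega⟩ rfl i, ed_v0_spoke hn ⟨0, by omega⟩ rfl j] at H2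
    exfalso; omega
  -- outer-inner
  · rw [ed_u0_outer hn ⟨0, by omega⟩ rfl i, ed_u0_inner hn ⟨0, by omega⟩ rfl j] at H0
    rw [ed_v0_outer hn ⟨0, by omega⟩ rfl i, ed_v0_inner hn ⟨0, by omega⟩ rfl j] at H2
    exfalso; omega
  -- spoke-outer
  · rw [ed_u0_spoke hn ⟨0, by omega⟩ rfl i, ed_u0_outer hn ⟨0, by omega⟩ rfl j] at H0
    rw [ed_v0_spoke hn ⟨0, by omega⟩ rfl i, ed_v0_outer hn ⟨0, by omega⟩ rfl j] at H2
    exfalso; omega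
  -- spoke-spoke
  · rw [ed_u0_spoke hn ⟨0, by omega⟩ rfl i, ed_u0_spoke hn ⟨0, by omega⟩ rfl j] at H0
    rw [ed_u1_spoke hn ⟨1, by omega⟩ rfl i, ed_u1_spoke hn ⟨1, by omega⟩ rfl j] at H1
    obtain rfl : i = j := Fin.ext (inj_vert hn i.isLt j.isLt H0 H1)
    rfl
  -- spoke-inner
  · rw [ed_u0_spoke hn ⟨0, by omega⟩ rfl i, ed_u0_inner hn ⟨0, by omega⟩ rfl j] at H0
    rw [ed_v0_spoke hn ⟨0, by omega⟩ rfl i, ed_v0_inner hn ⟨0, by omega⟩ rfl j] at H2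
    exfalso
    unfold cd0 at H0 H2
    omega
  -- inner-outer
  · rw [ed_u0_inner hn ⟨0, by omega⟩ rfl i, ed_u0_outer hn ⟨0, by omega⟩ rfl j] at H0
    rw [ed_v0_inner hn ⟨0, by omega⟩ rfl i, ed_v0_outer hn ⟨0, by omega⟩ rfl j] at H2
    exfalso; omega
  -- inner-spoke
  · rw [ed_u0_inner hn ⟨0, by omega⟩ rfl i, ed_u0_spoke hn ⟨0, by omega⟩ rfl j] at H0
    rw [ed_v0_inner hn ⟨0, by omega⟩ rfl i, ed_v0_spoke hn ⟨0, by omega⟩ rfl j] at H2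
    exfalso
    unfold cd0 at H0 H2
    omega
  -- inner-inner
  · rw [ed_u0_inner hn ⟨0, by omega⟩ rfl i, ed_u0_inner hn ⟨0, by omega⟩ rfl j] at H0
    rw [ed_u1_inner hn ⟨1, by omega⟩ rfl i, ed_u1_inner hn ⟨1, by omega⟩ rfl j] at H1
    obtain rfl : i = j := Fin.ext (inj_edge hn i.isLt j.isLt (by omega) (by omega))
    rfl
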